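/- The numerical semigroup H = ⟨q^{n−1}, q^{n−1} + q^{r−1}, q^{2r−1} + q^{n−r−1}, q^{2r} − q^n + q^r + 1⟩ is telescopic: with generators a_1 = q^{n−1}, a_2 = q^{n−1}+q^{r−1}, a_3 = q^{2r−1}+q^{n−r−1}, a_4 = q^{2r}−q^n+q^r+1, and d_i = gcd(a_1,...,a_i), one has a_{i+1}/d_{i+1} ∈ ⟨a_1/d_i, ..., a_i/d_i⟩ for each i. -/

import Mathlib

/-- The four generators `a₁ = q^{n−1}`, `a₂ = q^{n−1}+q^{r−1}`, `a₃ = q^{2r−1}+q^{n−r−1}`,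
`a₄ = q^{2r}−q^n+q^r+1` (0-indexed). -/
def tgA (q n r : ℕ) : Fin 4 → ℕ :=
  ![q ^ (n - 1), q ^ (n - 1) + q ^ (r - 1), q ^ (2 * r - 1) + q ^ (n - r - 1),
    q ^ (2 * r) - q ^ n + q ^ r + 1]

/-- `dᵢ = gcd(a₁, …, aᵢ)` (0-indexed: gcd of `a₀, …, aᵢ`). -/
def tgD (q n r : ℕ) (i : Fin 4) : ℕ :=
  (Finset.univ.filter (· ≤ i)).gcd (tgA q n r)

theorem tg_aux (p e q a b n r : ℕ) (hp : Nat.Prime p) (he : 0 < e) (hq : q = p ^ e)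
    (hn : n = 2*a+b+3) (hr : r = a+b+2) :
    ∀ i : Fin 4, ∀ h : (i : ℕ) + 1 < 4,
      tgA q n r ⟨(i : ℕ) + 1, h⟩ / tgD q n r ⟨(i : ℕ) + 1, h⟩ ∈
        AddSubmonoid.closure ((fun j : Fin 4 => tgA q n r j / tgD q n r i) '' {j | j ≤ i}) := by
  subst hn hr hq
  set q := p ^ e with hq
  have hq1 : 1 ≤ q := Nat.one_le_pow _ _ hp.pos
  have hpos : ∀ x : ℕ, 0 < q ^ x := fun x => Nat.pow_pos hq1
  have hpdvd : ∀ x : ℕ, 0 < x → p ∣ q ^ x := by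
    intro x hx
    exact dvd_pow (dvd_pow_self p he.ne') (by omega)
  -- entries
  have hA0 : tgA q (2*a+b+3) (a+b+2) 0 = q^(a+b+1) * q^(a+1) := by
    show q ^ (2*a+b+3-1) = _
    rw [show 2*a+b+3-1 = (a+b+1)+(a+1) from by omega, pow_add]
  have hA0' : tgA q (2*a+b+3) (a+b+2) 0 = q^a * q^(a+b+2) := by
    show q ^ (2*a+b+3-1) = _
    rw [show 2*a+b+3-1 = a+(a+b+2) from by omega, pow_add]
  have hA1 : tgA q (2*a+b+3) (a+b+2) 1 = q^(a+b+1) * (q^(a+1)+1) := by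
    show q ^ (2*a+b+3-1) + q ^ (a+b+2-1) = _
    rw [show 2*a+b+3-1 = (a+b+1)+(a+1) from by omega,
        show a+b+2-1 = a+b+1 from by omega, pow_add]
    ring
  have hA2 : tgA q (2*a+b+3) (a+b+2) 2 = q^a * (q^(a+2*b+3)+1) := by
    show q ^ (2*(a+b+2)-1) + q ^ (2*a+b+3-(a+b+2)-1) = _
    rw [show 2*(a+b+2)-1 = a + (a+2*b+3) from by omega,
        show 2*a+b+3-(a+b+2)-1 = a from by omega, pow_add]
    ring
  have hA3 : tgA q (2*a+b+3) (a+b+2) 3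
      = (q^(a+1)-1)*(q^(b+1)-1) * q^(a+b+2) + (q^(a+2*b+3)+1) := by
    show q ^ (2*(a+b+2)) - q ^ (2*a+b+3) + q ^ (a+b+2) + 1 = _
    have h1 : q ^ (2*a+b+3) ≤ q ^ (2*(a+b+2)) := Nat.pow_le_pow_right hq1 (by omega)
    have h2 : 1 ≤ q ^ (a+1) := Nat.one_le_pow _ _ hq1
    have h3 : 1 ≤ q ^ (b+1) := Nat.one_le_pow _ _ hq1
    zify [h1, h2, h3]
    rw [show 2*(a+b+2) = (a+1)+((b+1)+(a+b+2)) from by omega,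
        show 2*a+b+3 = (a+1)+(a+b+2) from by omega,
        show a+2*b+3 = (b+1)+(a+b+2) from by omega]
    push_cast [pow_add]
    ring
  -- coprimality helper
  have hcop : ∀ y : ℕ, ¬ p ∣ y → ∀ c : ℕ, Nat.Coprime (q ^ c) y := by
    intro y hy c
    rw [hq, ← pow_mul]
    exact Nat.Coprime.pow_left _ ((hp.coprime_iff_not_dvd).2 hy)
  have hnd : ∀ x : ℕ, 0 < x → ¬ p ∣ q ^ x + 1 := by
    intro x hx hdvd
    have h1 : p ∣ q ^ x + 1 - q ^ x := Nat.dvd_sub hdvd (hpdvd x hx)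
    rw [Nat.add_sub_cancel_left] at h1
    exact hp.one_lt.ne' (Nat.dvd_one.1 h1)
  -- gcds
  have hD0 : tgD q (2*a+b+3) (a+b+2) 0 = q^(a+b+1) * q^(a+1) := by
    have h : (Finset.univ.filter (· ≤ (0 : Fin 4))) = {0} := by decide
    rw [tgD, h, Finset.gcd_singleton, normalize_eq, hA0]
  have hD1 : tgD q (2*a+b+3) (a+b+2) 1 = q^(a+b+1) := by
    have h : (Finset.univ.filter (· ≤ (1 : Fin 4))) = {0, 1} := by decide
    rw [tgD, h, Finset.gcd_insert, Finset.gcd_singleton, normalize_eq]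
    show Nat.gcd _ _ = _
    rw [hA0, hA1, Nat.gcd_mul_left]
    simp
  have hD2 : tgD q (2*a+b+3) (a+b+2) 2 = q^a := by
    have h : (Finset.univ.filter (· ≤ (2 : Fin 4))) = {0, 1, 2} := by decide
    rw [tgD, h, Finset.gcd_insert, Finset.gcd_insert, Finset.gcd_singleton, normalize_eq]
    show Nat.gcd _ (Nat.gcd _ _) = _
    rw [← Nat.gcd_assoc]
    have : Nat.gcd (tgA q (2*a+b+3) (a+b+2) 0) (tgA q (2*a+b+3) (a+b+2) 1) = q^(a+b+1) := by
      rw [hA0, hA1, Nat.gcd_mul_left]; simp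
    rw [this, hA2, show q^(a+b+1) = q^a * q^(b+1) from by rw [← pow_add, Nat.add_assoc], Nat.gcd_mul_left,
        (hcop _ (hnd (a+2*b+3) (by omega)) (b+1)), mul_one]
  have hD3 : tgD q (2*a+b+3) (a+b+2) 3 = 1 := by
    have h : (Finset.univ.filter (· ≤ (3 : Fin 4))) = {0, 1, 2, 3} := by decide
    rw [tgD, h, Finset.gcd_insert, Finset.gcd_insert, Finset.gcd_insert, Finset.gcd_singleton,
        normalize_eq]
    show Nat.gcd _ (Nat.gcd _ (Nat.gcd _ _)) = _
    rw [← Nat.gcd_assoc, ← Nat.gcd_assoc]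
    have h012 : Nat.gcd (Nat.gcd (tgA q (2*a+b+3) (a+b+2) 0) (tgA q (2*a+b+3) (a+b+2) 1))
        (tgA q (2*a+b+3) (a+b+2) 2) = q^a := by
      have : Nat.gcd (tgA q (2*a+b+3) (a+b+2) 0) (tgA q (2*a+b+3) (a+b+2) 1) = q^(a+b+1) := by
        rw [hA0, hA1, Nat.gcd_mul_left]; simp
      rw [this, hA2, show q^(a+b+1) = q^a * q^(b+1) from by rw [← pow_add, Nat.add_assoc], Nat.gcd_mul_left,
          (hcop _ (hnd (a+2*b+3) (by omega)) (b+1)), mul_one]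
    rw [h012]
    have hnd3 : ¬ p ∣ tgA q (2*a+b+3) (a+b+2) 3 := by
      intro hdvd
      have h1 : p ∣ tgA q (2*a+b+3) (a+b+2) 3 - (q^(a+1)-1)*(q^(b+1)-1) * q^(a+b+2) :=
        Nat.dvd_sub hdvd (Dvd.dvd.mul_left (hpdvd (a+b+2) (by omega)) _)
      rw [hA3, Nat.add_sub_cancel_left] at h1
      exact hnd (a+2*b+3) (by omega) h1
    exact hcop _ hnd3 a
  intro i h
  fin_cases i
  · -- i = 0
    show tgA q (2*a+b+3) (a+b+2) ⟨0+1, h⟩ / tgD q (2*a+b+3) (a+b+2) ⟨0+1, h⟩ ∈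
      AddSubmonoid.closure ((fun j : Fin 4 => tgA q (2*a+b+3) (a+b+2) j /
        tgD q (2*a+b+3) (a+b+2) 0) '' {j | j ≤ 0})
    have htarget : tgA q (2*a+b+3) (a+b+2) ⟨0+1, h⟩ / tgD q (2*a+b+3) (a+b+2) ⟨0+1, h⟩
        = q^(a+1)+1 := by
      rw [show (⟨0+1, h⟩ : Fin 4) = 1 from rfl, hA1, hD1, Nat.mul_div_cancel_left _ (hpos _)]
    rw [htarget]
    have hmem : (1:ℕ) ∈ ((fun j : Fin 4 => tgA q (2*a+b+3) (a+b+2) j /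
        tgD q (2*a+b+3) (a+b+2) 0) '' {j | j ≤ 0}) := by
      refine ⟨0, by decide, ?_⟩
      simp only
      rw [hA0, hD0, Nat.div_self (by positivity)]
    have : q^(a+1)+1 = (q^(a+1)+1) • (1:ℕ) := by simp
    rw [this]
    exact nsmul_mem (AddSubmonoid.subset_closure hmem) _
  · -- i = 1
    show tgA q (2*a+b+3) (a+b+2) ⟨1+1, h⟩ / tgD q (2*a+b+3) (a+b+2) ⟨1+1, h⟩ ∈
      AddSubmonoid.closure ((fun j : Fin 4 => tgA q (2*a+b+3) (a+b+2) j /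
        tgD q (2*a+b+3) (a+b+2) 1) '' {j | j ≤ 1})
    have htarget : tgA q (2*a+b+3) (a+b+2) ⟨1+1, h⟩ / tgD q (2*a+b+3) (a+b+2) ⟨1+1, h⟩
        = q^(a+2*b+3)+1 := by
      rw [show (⟨1+1, h⟩ : Fin 4) = 2 from rfl, hA2, hD2, Nat.mul_div_cancel_left _ (hpos _)]
    rw [htarget]
    have hmem0 : q^(a+1) ∈ ((fun j : Fin 4 => tgA q (2*a+b+3) (a+b+2) j /
        tgD q (2*a+b+3) (a+b+2) 1) '' {j | j ≤ 1}) := by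
      refine ⟨0, by decide, ?_⟩
      simp only
      rw [hA0, hD1, Nat.mul_div_cancel_left _ (hpos _)]
    have hmem1 : q^(a+1)+1 ∈ ((fun j : Fin 4 => tgA q (2*a+b+3) (a+b+2) j /
        tgD q (2*a+b+3) (a+b+2) 1) '' {j | j ≤ 1}) := by
      refine ⟨1, by decide, ?_⟩
      simp only
      rw [hA1, hD1, Nat.mul_div_cancel_left _ (hpos _)]
    have heq : q^(a+2*b+3)+1 = (q^(2*b+2)-1) • q^(a+1) + (q^(a+1)+1) := by
      rw [smul_eq_mul]
      have h2 : 1 ≤ q ^ (2*b+2) := Nat.one_le_pow _ _ hq1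
      zify [h2]
      rw [show a+2*b+3 = (2*b+2)+(a+1) from by omega]
      push_cast [pow_add]
      ring
    rw [heq]
    exact add_mem (nsmul_mem (AddSubmonoid.subset_closure hmem0) _)
      (AddSubmonoid.subset_closure hmem1)
  · -- i = 2
    show tgA q (2*a+b+3) (a+b+2) ⟨2+1, h⟩ / tgD q (2*a+b+3) (a+b+2) ⟨2+1, h⟩ ∈
      AddSubmonoid.closure ((fun j : Fin 4 => tgA q (2*a+b+3) (a+b+2) j /
        tgD q (2*a+b+3) (a+b+2) 2) '' {j | j ≤ 2})
    have htarget : tgA q (2*a+b+3) (a+b+2) ⟨2+1, h⟩ / tgD q (2*a+b+3) (a+b+2) ⟨2+1, h⟩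
        = (q^(a+1)-1)*(q^(b+1)-1) * q^(a+b+2) + (q^(a+2*b+3)+1) := by
      rw [show (⟨2+1, h⟩ : Fin 4) = 3 from rfl, hD3, Nat.div_one, hA3]
    rw [htarget]
    have hmem0 : q^(a+b+2) ∈ ((fun j : Fin 4 => tgA q (2*a+b+3) (a+b+2) j /
        tgD q (2*a+b+3) (a+b+2) 2) '' {j | j ≤ 2}) := by
      refine ⟨0, by decide, ?_⟩
      simp only
      rw [hA0', hD2, Nat.mul_div_cancel_left _ (hpos _)]
    have hmem2 : q^(a+2*b+3)+1 ∈ ((fun j : Fin 4 => tgA q (2*a+b+3) (a+b+2) j /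
        tgD q (2*a+b+3) (a+b+2) 2) '' {j | j ≤ 2}) := by
      refine ⟨2, by decide, ?_⟩
      simp only
      rw [hA2, hD2, Nat.mul_div_cancel_left _ (hpos _)]
    rw [show (q^(a+1)-1)*(q^(b+1)-1) * q^(a+b+2)
        = ((q^(a+1)-1)*(q^(b+1)-1)) • q^(a+b+2) from (smul_eq_mul _ _).symm]
    exact add_mem (nsmul_mem (AddSubmonoid.subset_closure hmem0) _)
      (AddSubmonoid.subset_closure hmem2)
  · -- i = 3 : impossible
    exact absurd h (by decide)

/-- the numerical semigroup
`H = ⟨q^{n−1}, q^{n−1}+q^{r−1}, q^{2r−1}+q^{n−r−1}, q^{2r}−q^n+q^r+1⟩` is telescopic: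
with `dᵢ = gcd(a₁,…,aᵢ)`, one has `a_{i+1}/d_{i+1} ∈ ⟨a₁/dᵢ, …, aᵢ/dᵢ⟩` for each `i`. -/
theorem stmt_10 (p e q n r : ℕ) (hp : Nat.Prime p) (he : 0 < e) (hq : q = p ^ e)
    (hn : 3 ≤ n) (h1 : n < 2 * r) (h2 : r < n) (hcop : Nat.gcd n r = 1) :
    ∀ i : Fin 4, ∀ h : (i : ℕ) + 1 < 4,
      tgA q n r ⟨(i : ℕ) + 1, h⟩ / tgD q n r ⟨(i : ℕ) + 1, h⟩ ∈
        AddSubmonoid.closure ((fun j : Fin 4 => tgA q n r j / tgD q n r i) '' {j | j ≤ i}) := by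
  have hrn : r + 1 ≤ n := h2
  have h2r : n + 1 ≤ 2 * r := h1
  exact tg_aux p e q (n - r - 1) (2*r - n - 1) n r hp he hq (by omega) (by omega)
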